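/- Let V be a module over a commutative ring with a commutative associative product ⋆ and a symmetric bilinear form g satisfying the Frobenius property g(x⋆y, z) = g(x, y⋆z). Let N, E, ω, ∘ be as in the twisted-product construction (ξ∘η = (ξ⋆η⋆ω)⋆ω^{-1} on N) and define the twisted form ᵚg(ξ,η) = g(ξ⋆ω, η⋆ω) on N. Then (N, ∘, ᵚg) again satisfies the Frobenius property: ᵚg(ξ∘η, ζ) = ᵚg(η, ξ∘ζ) for all ξ,η,ζ ∈ N. -/
import Mathlib


/-- With `⋆ = m` commutative, associative, and `g` a symmetric
Frobenius form (`g(x⋆y,z) = g(x,y⋆z)`), the twisted product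
`ξ∘η = ((ξ⋆η)⋆ω)⋆ω⁻¹` on `N` together with the twisted form
`ᵚg(ξ,η) = g(ξ⋆ω, η⋆ω)` again satisfies the Frobenius property:
`ᵚg(ξ∘η, ζ) = ᵚg(η, ξ∘ζ)`. -/
theorem stmt_16 {R V : Type*} [CommRing R] [AddCommGroup V] [Module R V]
    (m : V →ₗ[R] V →ₗ[R] V)
    (hcomm : ∀ x y : V, m x y = m y x)
    (hassoc : ∀ x y z : V, m (m x y) z = m x (m y z))
    (g : V →ₗ[R] V →ₗ[R] R)
    (hgsymm : ∀ x y : V, g x y = g y x)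
    (hfrob : ∀ x y z : V, g (m x y) z = g x (m y z))
    (N E : Submodule R V) (ω : V)
    (e : N ≃ₗ[R] E)
    (he : ∀ ξ : N, (e ξ : V) = m ξ ω)
    (hE : ∀ ξ η : N, m (m (ξ : V) η) ω ∈ E)
    (c : N → N → N)
    (hc : ∀ ξ η : N, c ξ η = e.symm ⟨m (m (ξ : V) η) ω, hE ξ η⟩) :
    ∀ ξ η ζ : N,
      g (m ((c ξ η : N) : V) ω) (m (ζ : V) ω) =
        g (m (η : V) ω) (m ((c ξ ζ : N) : V) ω) := by
  intro ξ η ζ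
  have key : ∀ a b : N, m ((c a b : N) : V) ω = m (m (a : V) b) ω := by
    intro a b
    rw [← he, hc, e.apply_symm_apply]
  rw [key, key]
  calc g (m (m (ξ : V) η) ω) (m (ζ : V) ω)
      = g (m (ξ : V) η) (m ω (m (ζ : V) ω)) := hfrob _ _ _
    _ = g (ξ : V) (m (η : V) (m ω (m (ζ : V) ω))) := hfrob _ _ _
    _ = g (ξ : V) (m (ζ : V) (m ω (m (η : V) ω))) := by
        congr 1
        calc m (η : V) (m ω (m (ζ : V) ω))
            = m (m (η : V) ω) (m (ζ : V) ω) := (hassoc _ _ _).symm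
          _ = m (m (ζ : V) ω) (m (η : V) ω) := hcomm _ _
          _ = m (ζ : V) (m ω (m (η : V) ω)) := hassoc _ _ _
    _ = g (m (ξ : V) ζ) (m ω (m (η : V) ω)) := (hfrob _ _ _).symm
    _ = g (m (m (ξ : V) ζ) ω) (m (η : V) ω) := (hfrob _ _ _).symm
    _ = g (m (η : V) ω) (m (m (ξ : V) ζ) ω) := hgsymm _ _
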